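/- Let P₁, P₂, τ₁, τ₂ > 0 satisfy τ₂·γ(P₁) ≤ τ₁·(γ(P₁+P₂) − γ(P₁)) (Case I), write a = γ(P₁), b = γ(P₂), s = γ(P₁+P₂), and let R = {(d₁, d₂) ∈ ℝ² : a·d₁ ≥ τ₁, b·d₂ ≥ τ₂, a·d₁ + (s−a)·d₂ ≥ τ₁ + τ₂}. Then the point (τ₁/a, τ₁/a) belongs to R, and for every (d₁, d₂) ∈ R one has max{d₁, d₂} ≥ τ₁/a; in other words, the minimum over R of max{d₁, d₂} equals τ₁/γ(P₁). -/

import Mathlib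

/-- γ(x) = (1/2)·log₂(1+x). -/
noncomputable def gam (x : ℝ) : ℝ := (1/2) * Real.logb 2 (1 + x)

theorem stmt_17 (P₁ P₂ τ₁ τ₂ a b s : ℝ) (hP₁ : 0 < P₁) (hP₂ : 0 < P₂)
    (hτ₁ : 0 < τ₁) (hτ₂ : 0 < τ₂)
    (ha : a = gam P₁) (hb : b = gam P₂) (hs : s = gam (P₁ + P₂))
    (hcase : τ₂ * a ≤ τ₁ * (s - a))
    (R : Set (ℝ × ℝ))
    (hR : R = {d : ℝ × ℝ | a * d.1 ≥ τ₁ ∧ b * d.2 ≥ τ₂ ∧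
        a * d.1 + (s - a) * d.2 ≥ τ₁ + τ₂}) :
    (τ₁ / a, τ₁ / a) ∈ R ∧ ∀ d : ℝ × ℝ, d ∈ R → τ₁ / a ≤ max d.1 d.2 := by
  have ha0 : 0 < a := by
    rw [ha, gam]
    have := Real.logb_pos (by norm_num : (1:ℝ) < 2) (by linarith : (1:ℝ) < 1 + P₁)
    linarith
  have hsa : a < s := by
    rw [ha, hs, gam, gam]
    have := Real.logb_lt_logb (by norm_num : (1:ℝ) < 2) (by linarith : (0:ℝ) < 1 + P₁)
      (by linarith : (1:ℝ) + P₁ < 1 + (P₁ + P₂))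
    linarith
  have hbsa : s - a ≤ b := by
    rw [ha, hb, hs, gam, gam, gam]
    have hmul : Real.logb 2 ((1 + P₁) * (1 + P₂)) =
        Real.logb 2 (1 + P₁) + Real.logb 2 (1 + P₂) :=
      Real.logb_mul (by positivity) (by positivity)
    have hle : Real.logb 2 (1 + (P₁ + P₂)) ≤ Real.logb 2 ((1 + P₁) * (1 + P₂)) := by
      exact Real.logb_le_logb_of_le (by norm_num : (1:ℝ) < 2) (by nlinarith) (by nlinarith)
    linarith
  have hdiag : a * (τ₁ / a) = τ₁ := by field_simp
  constructor
  · rw [hR]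
    refine ⟨by rw [hdiag], ?_, ?_⟩
    · rw [ge_iff_le, ← sub_nonneg]
      have : τ₂ * a ≤ τ₁ * b := le_trans hcase (by nlinarith)
      have : b * (τ₁ / a) - τ₂ = (τ₁ * b - τ₂ * a) / a := by field_simp
      rw [this]
      apply div_nonneg (by linarith) ha0.le
    · rw [hdiag, ge_iff_le, ← sub_nonneg]
      have : τ₁ + (s - a) * (τ₁ / a) - (τ₁ + τ₂) = (τ₁ * (s - a) - τ₂ * a) / a := by
        field_simp; ring
      rw [this]
      apply div_nonneg (by linarith) ha0.le
  · intro d hd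
    rw [hR] at hd
    have h1 : τ₁ / a ≤ d.1 := by
      rw [div_le_iff₀ ha0]
      linarith [hd.1]
    exact le_trans h1 (le_max_left _ _)
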